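/- Let p ≥ 1 be an integer and θ > 0, let (x, λ, y) be a global solution of the closed-loop control system on [0, ∞) with λ nondecreasing, and let z* ∈ H with 0 ∈ A z*. Then for every t > 0: ‖x(t) − y(t)‖² ≤ ‖x(0) − z*‖²/(2t), and consequently the residue satisfies inf_{ξ ∈ A(y(t))} ‖ξ‖ ≤ ‖x(t) − y(t)‖/λ(t) ≤ θ^{−1}·(‖x(0) − z*‖²/(2t))^{p/2}; in particular the pointwise convergence rate in terms of the residue function is O(t^{−p/2}). -/

import Mathlib

open scoped Pointwise
open RealInnerProductSpace Filter Topology Set Metric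

/-- A solution of the closed-loop control system on the time set `T`:
`x` is continuously differentiable with `x'(t) = y(t) - x(t)`,
`y(t)` is the resolvent point `(I + λ(t)A)⁻¹ x(t)` (i.e. `x(t) - y(t) ∈ λ(t) • A (y t)`),
`λ` is continuous and positive, and the algebraic equation
`λ(t) ‖y(t) - x(t)‖^{p-1} = θ` holds. -/
def IsCLSolution {H : Type*} [NormedAddCommGroup H] [InnerProductSpace ℝ H]
    (A : H → Set H) (p : ℕ) (θ : ℝ) (T : Set ℝ)
    (x : ℝ → H) (lam : ℝ → ℝ) (y : ℝ → H) : Prop :=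
  (∀ t ∈ T, 0 < lam t) ∧ ContinuousOn lam T ∧
  (∀ t ∈ T, x t - y t ∈ lam t • A (y t)) ∧
  (∀ t ∈ T, HasDerivWithinAt x (y t - x t) T t) ∧
  ContinuousOn (fun t => y t - x t) T ∧
  (∀ t ∈ T, lam t * ‖y t - x t‖ ^ (p - 1) = θ)

/-- Auxiliary: the residual norm `‖x t - y t‖` is nonincreasing when `lam` is constant
(the `p = 1` case), via the nonexpansiveness-type flow argument. -/
lemma residual_antitone_const_lam {H : Type*} [NormedAddCommGroup H] [InnerProductSpace ℝ H]
    (A : H → Set H)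
    (hmono : ∀ x y u v : H, u ∈ A x → v ∈ A y → 0 ≤ ⟪u - v, x - y⟫)
    (θ : ℝ) (hθ : 0 < θ)
    (x : ℝ → H) (y : ℝ → H) (a : ℝ → H)
    (ha : ∀ t ∈ Ici (0:ℝ), a t ∈ A (y t))
    (hxa : ∀ t ∈ Ici (0:ℝ), x t - y t = θ • a t)
    (hx' : ∀ t ∈ Ici (0:ℝ), HasDerivWithinAt x (y t - x t) (Ici 0) t) :
    AntitoneOn (fun t => ‖x t - y t‖) (Ici 0) := by
  -- step 1: for each h > 0, the function r ↦ ‖x (r+h) - x r‖² is nonincreasing on [0,∞)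
  have key : ∀ h : ℝ, 0 < h → AntitoneOn (fun r => ‖x (r + h) - x r‖ ^ 2) (Ici 0) := by
    intro h hh
    have hD : ∀ r ∈ Ici (0:ℝ), HasDerivWithinAt (fun r => x (r + h) - x r)
        ((y (r + h) - x (r + h)) - (y r - x r)) (Ici 0) r := by
      intro r hr
      have hrh : r + h ∈ Ici (0:ℝ) := by
        simp only [mem_Ici] at hr ⊢; linarith
      have h1 : HasDerivWithinAt (fun r : ℝ => x (r + h)) (y (r + h) - x (r + h)) (Ici 0) r := by
        have hmap : MapsTo (fun r : ℝ => r + h) (Ici 0) (Ici 0) := by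
          intro z hz; simp only [mem_Ici] at hz ⊢; linarith
        have := (hx' (r + h) hrh).scomp (h := fun r : ℝ => r + h) (x := r)
          ((hasDerivWithinAt_id r (Ici 0)).add_const h) hmap
        simpa [Function.comp_def] using this
      exact h1.sub (hx' r hr)
    have hG : ∀ r ∈ Ici (0:ℝ), HasDerivWithinAt (fun r => ‖x (r + h) - x r‖ ^ 2)
        (2 * ⟪(y (r + h) - x (r + h)) - (y r - x r), x (r + h) - x r⟫) (Ici 0) r := by
      intro r hr
      have h2 := (hD r hr).inner ℝ (hD r hr)
      simp only [real_inner_self_eq_norm_sq] at h2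
      refine h2.congr_deriv ?_
      rw [real_inner_comm]; ring
    refine antitoneOn_of_hasDerivWithinAt_nonpos (convex_Ici 0)
      (fun r hr => ((hG r hr).continuousWithinAt))
      (f' := fun r => 2 * ⟪(y (r + h) - x (r + h)) - (y r - x r), x (r + h) - x r⟫)
      (fun r hr => ((hG r (interior_subset hr)).mono interior_subset)) ?_
    intro r hr
    rw [interior_Ici] at hr
    have hr0 : r ∈ Ici (0:ℝ) := mem_Ici.mpr (le_of_lt (mem_Ioi.mp hr))
    have hrh : r + h ∈ Ici (0:ℝ) := by simp only [mem_Ici] at hr0 ⊢; linarith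
    set b := a (r + h) - a r with hb
    set c := y (r + h) - y r with hc
    have e1 : x (r + h) - y (r + h) = θ • a (r + h) := hxa _ hrh
    have e2 : x r - y r = θ • a r := hxa _ hr0
    have hw : (y (r + h) - x (r + h)) - (y r - x r) = -(θ • b) := by
      rw [hb, smul_sub]
      rw [← e1, ← e2]; abel
    have hd : x (r + h) - x r = θ • b + c := by
      rw [hb, hc, smul_sub, ← e1, ← e2]; abel
    have hbc : 0 ≤ ⟪b, c⟫ := hmono _ _ _ _ (ha _ hrh) (ha _ hr0)
    have hbb : 0 ≤ ⟪b, b⟫ := real_inner_self_nonneg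
    simp only [hw, hd, inner_neg_left, inner_add_right, real_inner_smul_left,
      real_inner_smul_right]
    nlinarith [mul_nonneg hθ.le hbc, mul_nonneg (mul_nonneg hθ.le hθ.le) hbb]
  -- step 2: pass to the limit h → 0⁺ via slopes
  have hslope : ∀ r ∈ Ici (0:ℝ),
      Tendsto (fun τ => ‖x τ - x r‖ / (τ - r)) (𝓝[>] r) (𝓝 ‖y r - x r‖) := by
    intro r hr
    have h1 : Tendsto (slope x r) (𝓝[Ici 0 \ {r}] r) (𝓝 (y r - x r)) :=
      hasDerivWithinAt_iff_tendsto_slope.mp (hx' r hr)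
    have hsub : Ioi r ⊆ Ici 0 \ {r} := by
      intro τ hτ
      rw [mem_Ioi] at hτ
      exact ⟨le_trans hr hτ.le, by simp only [mem_singleton_iff]; exact ne_of_gt hτ⟩
    have h2 : Tendsto (slope x r) (𝓝[>] r) (𝓝 (y r - x r)) :=
      h1.mono_left (nhdsWithin_mono r hsub)
    have h3 := h2.norm
    refine h3.congr' ?_
    filter_upwards [self_mem_nhdsWithin] with τ hτ
    have hτr : (0:ℝ) < τ - r := by simp only [mem_Ioi] at hτ; linarith
    rw [slope_def_module, norm_smul, Real.norm_eq_abs, abs_of_pos (inv_pos.mpr hτr),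
      div_eq_inv_mul]
  intro s hs t ht hst
  simp only
  -- prove ‖x t - y t‖ ≤ ‖x s - y s‖
  have hmap : Tendsto (fun τ => s + (τ - t)) (𝓝[>] t) (𝓝[>] s) := by
    rw [tendsto_nhdsWithin_iff]
    constructor
    · have : Tendsto (fun τ : ℝ => s + (τ - t)) (𝓝 t) (𝓝 (s + (t - t))) := by
        exact (tendsto_const_nhds.add ((continuous_id.sub continuous_const).tendsto t))
      simp only [sub_self, add_zero] at this
      exact this.mono_left nhdsWithin_le_nhds
    · filter_upwards [self_mem_nhdsWithin] with τ hτ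
      simp only [mem_Ioi] at hτ ⊢; linarith
  have hR : Tendsto (fun τ => ‖x (s + (τ - t)) - x s‖ / (τ - t)) (𝓝[>] t) (𝓝 ‖y s - x s‖) := by
    have := (hslope s hs).comp hmap
    refine this.congr ?_
    intro τ
    simp only [Function.comp_apply, add_sub_cancel_left]
  have hL : Tendsto (fun τ => ‖x τ - x t‖ / (τ - t)) (𝓝[>] t) (𝓝 ‖y t - x t‖) := hslope t ht
  have hineq : ∀ᶠ τ in 𝓝[>] t, ‖x τ - x t‖ / (τ - t) ≤ ‖x (s + (τ - t)) - x s‖ / (τ - t) := by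
    filter_upwards [self_mem_nhdsWithin] with τ hτ
    simp only [mem_Ioi] at hτ
    have hh : 0 < τ - t := by linarith
    have := (key (τ - t) hh) hs ht hst
    simp only at this
    have h4 : ‖x (t + (τ - t)) - x t‖ ≤ ‖x (s + (τ - t)) - x s‖ :=
      (pow_le_pow_iff_left₀ (norm_nonneg _) (norm_nonneg _) two_ne_zero).mp this
    rw [add_sub_cancel] at h4
    exact div_le_div_of_nonneg_right h4 hh.le
  have := le_of_tendsto_of_tendsto hL hR hineq
  rw [norm_sub_rev (y t), norm_sub_rev (y s)] at this
  exact this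

/-- Pointwise rate: along a global solution of the closed-loop control
system, for `t > 0`, `‖x(t) - y(t)‖² ≤ ‖x(0) - z*‖²/(2t)` and the residue satisfies
`res(y(t)) ≤ ‖x(t) - y(t)‖/λ(t) ≤ θ⁻¹ (‖x(0) - z*‖²/(2t))^{p/2}`. -/
theorem stmt_12 {H : Type*} [NormedAddCommGroup H] [InnerProductSpace ℝ H] [CompleteSpace H]
    (A : H → Set H)
    (hmono : ∀ x y u v : H, u ∈ A x → v ∈ A y → 0 ≤ ⟪u - v, x - y⟫)
    (p : ℕ) (hp : 1 ≤ p) (θ : ℝ) (hθ : 0 < θ)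
    (x : ℝ → H) (lam : ℝ → ℝ) (y : ℝ → H)
    (hsol : IsCLSolution A p θ (Ici 0) x lam y)
    (hlam : MonotoneOn lam (Ici 0))
    (zstar : H) (hz : 0 ∈ A zstar) :
    ∀ t : ℝ, 0 < t →
      ‖x t - y t‖ ^ 2 ≤ ‖x 0 - zstar‖ ^ 2 / (2 * t)
      ∧ sInf ((fun ξ => ‖ξ‖) '' A (y t)) ≤ ‖x t - y t‖ / lam t
      ∧ ‖x t - y t‖ / lam t ≤ θ⁻¹ * (‖x 0 - zstar‖ ^ 2 / (2 * t)) ^ ((p : ℝ) / 2) := by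
  obtain ⟨hpos, hlamc, hin, hx', hyc, halg⟩ := hsol
  have hxC : ContinuousOn x (Ici 0) := fun t ht => (hx' t ht).continuousWithinAt
  -- the operator selection a t ∈ A (y t) with x t - y t = lam t • a t
  set a : ℝ → H := fun t => (lam t)⁻¹ • (x t - y t) with ha_def
  have ha : ∀ t ∈ Ici (0:ℝ), a t ∈ A (y t) := by
    intro t ht
    have h0 := hin t ht
    rw [Set.mem_smul_set] at h0
    obtain ⟨v, hv, hvs⟩ := h0
    have : a t = v := by
      simp only [ha_def, ← hvs, inv_smul_smul₀ (hpos t ht).ne']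
    rw [this]; exact hv
  have hxa : ∀ t ∈ Ici (0:ℝ), x t - y t = lam t • a t := by
    intro t ht
    simp only [ha_def, smul_inv_smul₀ (hpos t ht).ne']
  -- basic inner product inequality vs the zero zstar
  have I1 : ∀ t ∈ Ici (0:ℝ), 0 ≤ ⟪x t - y t, y t - zstar⟫ := by
    intro t ht
    have h0 := hmono (y t) zstar (a t) 0 (ha t ht) hz
    rw [sub_zero] at h0
    rw [hxa t ht, real_inner_smul_left]
    exact mul_nonneg (hpos t ht).le h0
  -- the residual norm is nonincreasing
  have hA : AntitoneOn (fun t => ‖x t - y t‖) (Ici 0) := by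
    rcases eq_or_lt_of_le hp with hp1 | hp2
    · -- p = 1 : lam is the constant θ
      have hlt : ∀ t ∈ Ici (0:ℝ), lam t = θ := by
        intro t ht
        have := halg t ht
        rwa [← hp1, Nat.sub_self, pow_zero, mul_one] at this
      have hxa' : ∀ t ∈ Ici (0:ℝ), x t - y t = θ • a t := by
        intro t ht; rw [← hlt t ht]; exact hxa t ht
      exact residual_antitone_const_lam A hmono θ hθ x y a ha hxa' hx'
    · -- p ≥ 2 : directly from the algebraic equation and monotonicity of lam
      intro s hs t ht hst
      simp only
      have e1 := halg s hs
      have e2 := halg t ht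
      have hls : lam s ≤ lam t := hlam hs ht hst
      have h1 : lam s * ‖y t - x t‖ ^ (p - 1) ≤ lam s * ‖y s - x s‖ ^ (p - 1) := by
        calc lam s * ‖y t - x t‖ ^ (p - 1)
            ≤ lam t * ‖y t - x t‖ ^ (p - 1) :=
              mul_le_mul_of_nonneg_right hls (pow_nonneg (norm_nonneg _) _)
          _ = θ := e2
          _ = lam s * ‖y s - x s‖ ^ (p - 1) := e1.symm
      have h2 : ‖y t - x t‖ ^ (p - 1) ≤ ‖y s - x s‖ ^ (p - 1) :=
        le_of_mul_le_mul_left h1 (hpos s hs)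
      have h3 : ‖y t - x t‖ ≤ ‖y s - x s‖ :=
        (pow_le_pow_iff_left₀ (norm_nonneg _) (norm_nonneg _)
          (by omega : p - 1 ≠ 0)).mp h2
      rw [norm_sub_rev (y t), norm_sub_rev (y s)] at h3
      exact h3
  intro t ht
  have ht0 : t ∈ Ici (0:ℝ) := le_of_lt ht
  -- Part 1 : Lyapunov estimate
  have part1 : ‖x t - y t‖ ^ 2 ≤ ‖x 0 - zstar‖ ^ 2 / (2 * t) := by
    set K := ‖x t - y t‖ ^ 2 with hK
    have hsub : Icc (0:ℝ) t ⊆ Ici 0 := fun r hr => hr.1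
    have hφderiv : ∀ r ∈ Ici (0:ℝ), HasDerivWithinAt
        (fun r => ‖x r - zstar‖ ^ 2 + 2 * K * r)
        (2 * ⟪y r - x r, x r - zstar⟫ + 2 * K) (Ici 0) r := by
      intro r hr
      have h1 : HasDerivWithinAt (fun r => x r - zstar) (y r - x r) (Ici 0) r :=
        (hx' r hr).sub_const zstar
      have h2 := h1.inner ℝ h1
      simp only [real_inner_self_eq_norm_sq] at h2
      have h3 : HasDerivWithinAt (fun r : ℝ => 2 * K * r) (2 * K) (Ici 0) r := by
        simpa using (hasDerivWithinAt_id r (Ici 0)).const_mul (2 * K)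
      have h4 := h2.add h3
      refine h4.congr_deriv ?_
      rw [real_inner_comm]; ring
    have hφ : AntitoneOn (fun r => ‖x r - zstar‖ ^ 2 + 2 * K * r) (Icc 0 t) := by
      refine antitoneOn_of_hasDerivWithinAt_nonpos (convex_Icc 0 t)
        (fun r hr => ((hφderiv r (hsub hr)).continuousWithinAt).mono hsub)
        (f' := fun r => 2 * ⟪y r - x r, x r - zstar⟫ + 2 * K)
        (fun r hr => (hφderiv r (hsub (interior_subset hr))).mono
          (interior_subset.trans hsub)) ?_
      intro r hr
      rw [interior_Icc] at hr
      have hr0 : r ∈ Ici (0:ℝ) := le_of_lt hr.1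
      have e : ⟪y r - x r, x r - zstar⟫
          = -‖x r - y r‖ ^ 2 - ⟪x r - y r, y r - zstar⟫ := by
        rw [show x r - zstar = (x r - y r) + (y r - zstar) from by abel,
          show y r - x r = -(x r - y r) from by abel,
          inner_neg_left, inner_add_right, real_inner_self_eq_norm_sq]
        ring
      have hKr : K ≤ ‖x r - y r‖ ^ 2 := by
        have := hA hr0 ht0 hr.2.le
        simp only at this
        exact pow_le_pow_left₀ (norm_nonneg _) this 2
      have := I1 r hr0
      simp only [e]
      linarith
    have h5 := hφ (left_mem_Icc.mpr ht.le) (right_mem_Icc.mpr ht.le) ht.le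
    simp only [mul_zero, add_zero] at h5
    have h6 : 0 ≤ ‖x t - zstar‖ ^ 2 := sq_nonneg _
    rw [le_div_iff₀ (by linarith : (0:ℝ) < 2 * t)]
    nlinarith
  refine ⟨part1, ?_, ?_⟩
  -- Part 2 : residue bound
  · have h0 := hin t ht0
    rw [Set.mem_smul_set] at h0
    obtain ⟨v, hv, hvs⟩ := h0
    have hnv : ‖v‖ = ‖x t - y t‖ / lam t := by
      rw [← hvs, norm_smul, Real.norm_eq_abs, abs_of_pos (hpos t ht0)]
      rw [mul_comm, mul_div_assoc, div_self (hpos t ht0).ne', mul_one]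
    rw [← hnv]
    refine csInf_le ⟨0, ?_⟩ ⟨v, hv, rfl⟩
    rintro w ⟨ξ, _, rfl⟩
    exact norm_nonneg _
  -- Part 3
  · have halg' := halg t ht0
    rw [norm_sub_rev (y t)] at halg'
    have hup : ‖x t - y t‖ / lam t = ‖x t - y t‖ ^ p / θ := by
      rw [div_eq_div_iff (hpos t ht0).ne' hθ.ne', ← halg']
      have hpp : ‖x t - y t‖ ^ p = ‖x t - y t‖ ^ (p - 1) * ‖x t - y t‖ := by
        rw [← pow_succ]
        congr 1
        omega
      rw [hpp]; ring
    have hrp : (‖x t - y t‖ ^ 2 : ℝ) ^ ((p : ℝ) / 2) = ‖x t - y t‖ ^ p := by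
      rw [← Real.rpow_natCast ‖x t - y t‖ 2, ← Real.rpow_mul (norm_nonneg _),
        ← Real.rpow_natCast ‖x t - y t‖ p]
      congr 1
      ring
    rw [hup, div_eq_mul_inv, mul_comm]
    refine mul_le_mul_of_nonneg_left ?_ (inv_nonneg.mpr hθ.le)
    rw [← hrp]
    exact Real.rpow_le_rpow (sq_nonneg _) part1 (by positivity)
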